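/- For every natural number k, the (k+1)×(k+1) complex matrix P^(k) with entries p^k_{rs} (0 ≤ r, s ≤ k) is invertible, and its inverse has entries q^k_{rs} = 2^k · i^{r+s} · p^k_{rs}; equivalently, for all 0 ≤ r, s ≤ k one has Σ_{q=0}^{k} p^k_{rq} · (2^k · i^{q+s} · p^k_{qs}) = 1 if r = s and 0 otherwise. -/

import Mathlib

/-- The coefficient `p^k_{rs}` expressing complex jet variables via real ones. -/
noncomputable def pcoef (k r s : ℕ) : ℂ :=
  (-1) ^ (k - r) *
    ((r.factorial * (k - r).factorial : ℂ) / ((2 : ℂ) ^ k * (s.factorial * (k - s).factorial))) *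
    Complex.I ^ s *
    ∑ α ∈ Finset.Icc (k - r - s) (min (k - r) (k - s)),
      (-1) ^ α * ((k - s).choose α : ℂ) * ((s.choose (k - r - α)) : ℂ)

open Polynomial Finset

noncomputable def ccP (k r q : ℕ) : ℂ :=
  ((1 - X : ℂ[X]) ^ (k - q) * (1 + X) ^ q).coeff (k - r)

lemma coeff_one_sub_pow (a n : ℕ) :
    ((1 - X : ℂ[X]) ^ a).coeff n = (-1) ^ n * a.choose n := by
  have h : (1 - X : ℂ[X]) = -1 * (X + C (-1)) := by rw [C_neg, C_1]; ring
  have h2 : ((-1 : ℂ[X])) ^ a = C ((-1 : ℂ) ^ a) := by simp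
  rw [h, mul_pow, h2, coeff_C_mul, coeff_X_add_C_pow]
  by_cases hn : n ≤ a
  · have : ((-1 : ℂ)) ^ a * (-1) ^ (a - n) = (-1) ^ n := by
      have : ((-1 : ℂ)) ^ (a - n) * (-1) ^ n = (-1) ^ a := by
        rw [← pow_add, Nat.sub_add_cancel hn]
      have hne : ((-1 : ℂ)) ^ n * (-1) ^ n = 1 := by
        rw [← mul_pow]; norm_num
      calc ((-1 : ℂ)) ^ a * (-1) ^ (a - n)
          = ((-1 : ℂ)) ^ (a - n) * (-1) ^ n * (-1) ^ (a - n) := by rw [this]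
        _ = ((-1 : ℂ)) ^ (a - n) * (-1) ^ (a-n) * (-1) ^ n := by ring
        _ = ((-1 : ℂ)) ^ (a - n + (a-n)) * (-1) ^ n := by rw [pow_add]
        _ = (-1) ^ n := by rw [← two_mul, pow_mul]; norm_num
    rw [← mul_assoc, this]
  · rw [Nat.choose_eq_zero_of_lt (by omega)]
    norm_num

lemma coeff_prod_eq (a b n : ℕ) :
    ((1 - X : ℂ[X]) ^ a * (1 + X) ^ b).coeff n =
      ∑ α ∈ Finset.Icc (n - b) (min a n),
        (-1) ^ α * (a.choose α : ℂ) * (b.choose (n - α) : ℂ) := by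
  rw [coeff_mul, Finset.Nat.sum_antidiagonal_eq_sum_range_succ_mk]
  have hss : Finset.Icc (n - b) (min a n) ⊆ Finset.range (n + 1) := by
    intro x hx
    simp only [Finset.mem_Icc, Finset.mem_range] at *
    omega
  rw [← Finset.sum_subset hss]
  · apply Finset.sum_congr rfl
    intro α hα
    rw [coeff_one_sub_pow, coeff_one_add_X_pow]
  intro α hrange hout
  simp only [Finset.mem_Icc, Finset.mem_range, not_and_or, not_le] at hrange hout
  rw [coeff_one_sub_pow, coeff_one_add_X_pow]
  rcases hout with h | h
  · have : b < n - α := by omega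
    rw [Nat.choose_eq_zero_of_lt this]
    norm_num
  · have : a < α := by omega
    rw [Nat.choose_eq_zero_of_lt this]
    norm_num

lemma pcoef_eq_ccP (k r s : ℕ) :
    pcoef k r s = (-1) ^ (k - r) *
      ((r.factorial * (k - r).factorial : ℂ) /
        ((2 : ℂ) ^ k * (s.factorial * (k - s).factorial))) *
      Complex.I ^ s * ccP k r s := by
  rw [pcoef, ccP, coeff_prod_eq, min_comm]

lemma key_poly (k s : ℕ) (hs : s ≤ k) :
    ∑ q ∈ Finset.range (k + 1),
        C (((1 - X : ℂ[X]) ^ (k - s) * (1 + X) ^ s).coeff q) *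
          ((1 - X) ^ q * (1 + X) ^ (k - q)) =
      C ((2 : ℂ) ^ k) * X ^ (k - s) := by
  set f : ℂ[X] := (1 - X) ^ (k - s) * (1 + X) ^ s with hf
  have hdeg : f.natDegree < k + 1 := by
    have h1 : ((1 - X : ℂ[X]) ^ (k - s)).natDegree ≤ k - s := by
      apply (natDegree_pow_le).trans
      have : (1 - X : ℂ[X]).natDegree ≤ 1 :=
        (natDegree_sub_le _ _).trans (by simp)
      nlinarith [this]
    have h2 : ((1 + X : ℂ[X]) ^ s).natDegree ≤ s := by
      apply (natDegree_pow_le).trans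
      have : (1 + X : ℂ[X]).natDegree ≤ 1 :=
        (natDegree_add_le _ _).trans (by simp)
      nlinarith [this]
    have h3 : f.natDegree ≤ ((1 - X : ℂ[X]) ^ (k - s)).natDegree + ((1 + X : ℂ[X]) ^ s).natDegree :=
      natDegree_mul_le
    omega
  rw [← sub_eq_zero]
  apply eq_zero_of_infinite_isRoot
  apply Set.Infinite.mono (s := {x : ℂ | x ≠ -1})
  swap
  · have : ({-1}ᶜ : Set ℂ).Infinite :=
      Set.Finite.infinite_compl (Set.finite_singleton _)
    convert this using 1
    ext x; simp
  intro t ht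
  simp only [Set.mem_setOf_eq] at ht
  have hv : (1 : ℂ) + t ≠ 0 := by
    intro h
    apply ht
    linear_combination h - t - 1 - (-1 : ℂ)
  simp only [Set.mem_setOf_eq, IsRoot, eval_sub, eval_finset_sum, eval_mul, eval_C, eval_pow, eval_add,
    eval_sub, eval_one, eval_X, sub_eq_zero]
  have step1 : ∑ q ∈ Finset.range (k + 1), f.coeff q * ((1 - t) ^ q * (1 + t) ^ (k - q)) =
      (1 + t) ^ k * f.eval ((1 - t) / (1 + t)) := by
    rw [eval_eq_sum_range' hdeg, Finset.mul_sum]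
    apply Finset.sum_congr rfl
    intro q hq
    rw [Finset.mem_range] at hq
    have hqk : q ≤ k := by omega
    have hk : (1 + t) ^ k = (1 + t) ^ (k - q) * (1 + t) ^ q := by
      rw [← pow_add, Nat.sub_add_cancel hqk]
    rw [div_pow, hk]
    field_simp
  rw [step1]
  have step2 : f.eval ((1 - t) / (1 + t)) =
      (1 - (1 - t) / (1 + t)) ^ (k - s) * (1 + (1 - t) / (1 + t)) ^ s := by
    simp [hf]
  rw [step2]
  have h1 : 1 - (1 - t) / (1 + t) = 2 * t / (1 + t) := by
    field_simp
    ring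
  have h2 : 1 + (1 - t) / (1 + t) = 2 / (1 + t) := by
    field_simp
    ring
  rw [h1, h2, div_pow, div_pow, mul_pow]
  have hk : (1 + t) ^ k = (1 + t) ^ (k - s) * (1 + t) ^ s := by
    rw [← pow_add, Nat.sub_add_cancel hs]
  have h2k : (2 : ℂ) ^ k = 2 ^ (k - s) * 2 ^ s := by
    rw [← pow_add, Nat.sub_add_cancel hs]
  rw [hk, h2k]
  field_simp

lemma ccP_orth (k r s : ℕ) (hr : r ≤ k) (hs : s ≤ k) :
    ∑ q ∈ Finset.range (k + 1), ccP k r q * ccP k q s =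
      (2 : ℂ) ^ k * (if r = s then 1 else 0) := by
  have h := congrArg (fun p : ℂ[X] => p.coeff (k - r)) (key_poly k s hs)
  simp only [finset_sum_coeff, coeff_C_mul, coeff_X_pow] at h
  have hL : ∀ q ∈ Finset.range (k + 1),
      (((1 - X : ℂ[X]) ^ (k - s) * (1 + X) ^ s).coeff q *
        ((1 - X : ℂ[X]) ^ q * (1 + X) ^ (k - q)).coeff (k - r)) =
      ccP k (k - q) s * ccP k r (k - q) := by
    intro q hq
    rw [Finset.mem_range] at hq
    have hq' : q ≤ k := by omega
    rw [ccP, ccP]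
    rw [Nat.sub_sub_self hq']
  rw [Finset.sum_congr rfl hL] at h
  rw [← Finset.sum_range_reflect] at h
  have hL2 : ∀ x ∈ Finset.range (k + 1),
      ccP k (k - (k + 1 - 1 - x)) s * ccP k r (k - (k + 1 - 1 - x)) =
        ccP k x s * ccP k r x := by
    intro x hx
    rw [Finset.mem_range] at hx
    have : k - (k + 1 - 1 - x) = x := by omega
    rw [this]
  rw [Finset.sum_congr rfl hL2] at h
  rw [Finset.sum_congr rfl (fun q _ => mul_comm (ccP k q s) (ccP k r q))] at h
  rw [h]
  have hiff : (k - r = k - s) ↔ (r = s) := by omega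
  by_cases hrs : r = s
  · rw [if_pos (hiff.mpr hrs), if_pos hrs]
  · rw [if_neg (fun hh => hrs (hiff.mp hh)), if_neg hrs]

lemma alg_helper (a b ek eq es u v c1 c2 Ar Bq As T : ℂ)
    (hBq : Bq ≠ 0) (hAs : As ≠ 0) (hT : T ≠ 0)
    (h1 : u * u = eq) (h2 : v * v = es) (h3 : b * eq = ek) :
    (a * (Ar / (T * Bq)) * u * c1) * (T * (u * v) * (b * (Bq / (T * As)) * v * c2)) =
      a * (-1) ^ 0 * ek * es * (Ar / (T * As)) * (c1 * c2) := by
  subst h1 h2 h3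
  field_simp

lemma entry_eq (k r s : ℕ) (hr : r ≤ k) (hs : s ≤ k) :
    ∑ q ∈ Finset.range (k + 1),
        pcoef k r q * ((2 : ℂ) ^ k * Complex.I ^ (q + s) * pcoef k q s) =
      if r = s then 1 else 0 := by
  have hT : ((2 : ℂ) ^ k) ≠ 0 := pow_ne_zero _ two_ne_zero
  have hAs : ((s.factorial : ℂ) * (k - s).factorial) ≠ 0 := by
    have := s.factorial_ne_zero
    have := (k - s).factorial_ne_zero
    simp_all [Nat.cast_ne_zero]
  have hterm : ∀ q ∈ Finset.range (k + 1),
      pcoef k r q * ((2 : ℂ) ^ k * Complex.I ^ (q + s) * pcoef k q s) =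
        ((-1 : ℂ)) ^ (k - r) * (-1) ^ 0 * (-1) ^ k * (-1) ^ s *
          ((r.factorial * (k - r).factorial : ℂ) /
            ((2 : ℂ) ^ k * (s.factorial * (k - s).factorial))) *
          (ccP k r q * ccP k q s) := by
    intro q hq
    rw [Finset.mem_range] at hq
    have hq' : q ≤ k := by omega
    have hBq : ((q.factorial : ℂ) * (k - q).factorial) ≠ 0 := by
      have := q.factorial_ne_zero
      have := (k - q).factorial_ne_zero
      simp_all [Nat.cast_ne_zero]
    have h1 : Complex.I ^ q * Complex.I ^ q = (-1 : ℂ) ^ q := by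
      rw [← mul_pow, Complex.I_mul_I]
    have h2 : Complex.I ^ s * Complex.I ^ s = (-1 : ℂ) ^ s := by
      rw [← mul_pow, Complex.I_mul_I]
    have h3 : ((-1 : ℂ)) ^ (k - q) * (-1) ^ q = (-1 : ℂ) ^ k := by
      rw [← pow_add, Nat.sub_add_cancel hq']
    rw [pcoef_eq_ccP k r q, pcoef_eq_ccP k q s, pow_add]
    exact alg_helper _ _ _ _ _ _ _ _ _ _ _ _ _ hBq hAs hT h1 h2 h3
  rw [Finset.sum_congr rfl hterm, ← Finset.mul_sum, ccP_orth k r s hr hs]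
  by_cases hrs : r = s
  · subst hrs
    simp only [if_pos rfl]
    have hAr := hAs
    have hsg : ((-1 : ℂ)) ^ (k - r) * (-1) ^ r = (-1 : ℂ) ^ k := by
      rw [← pow_add, Nat.sub_add_cancel hr]
    have hsg2 : ((-1 : ℂ)) ^ k * (-1) ^ k = 1 := by
      rw [← mul_pow]; norm_num
    have : ((-1 : ℂ)) ^ (k - r) * (-1) ^ 0 * (-1) ^ k * (-1) ^ r = 1 := by
      calc ((-1 : ℂ)) ^ (k - r) * (-1) ^ 0 * (-1) ^ k * (-1) ^ r
          = ((-1 : ℂ)) ^ (k - r) * (-1) ^ r * ((-1) ^ k) := by ring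
        _ = ((-1 : ℂ)) ^ k * (-1) ^ k := by rw [hsg]
        _ = 1 := hsg2
    have hr1 : (r.factorial : ℂ) ≠ 0 := by exact_mod_cast r.factorial_ne_zero
    have hr2 : ((k - r).factorial : ℂ) ≠ 0 := by exact_mod_cast (k - r).factorial_ne_zero
    field_simp
    linear_combination this
  · simp only [if_neg hrs, mul_zero]

/-- The matrix `P^(k) = (p^k_{rs})` is invertible and its inverse has entries
`q^k_{rs} = 2^k i^{r+s} p^k_{rs}`. -/
theorem pcoef_matrix_invertible (k : ℕ) :
    (Matrix.of fun r s : Fin (k + 1) => pcoef k r s) *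
        (Matrix.of fun r s : Fin (k + 1) =>
          (2 : ℂ) ^ k * Complex.I ^ ((r : ℕ) + (s : ℕ)) * pcoef k r s) = 1 ∧
    (Matrix.of fun r s : Fin (k + 1) =>
          (2 : ℂ) ^ k * Complex.I ^ ((r : ℕ) + (s : ℕ)) * pcoef k r s) *
        (Matrix.of fun r s : Fin (k + 1) => pcoef k r s) = 1 := by
  have hmain : (Matrix.of fun r s : Fin (k + 1) => pcoef k r s) *
      (Matrix.of fun r s : Fin (k + 1) =>
        (2 : ℂ) ^ k * Complex.I ^ ((r : ℕ) + (s : ℕ)) * pcoef k r s) = 1 := by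
    ext i j
    rw [Matrix.mul_apply, Matrix.one_apply]
    simp only [Matrix.of_apply]
    rw [Fin.sum_univ_eq_sum_range
      (fun q => pcoef k i q * ((2 : ℂ) ^ k * Complex.I ^ (q + (j : ℕ)) * pcoef k q j))]
    rw [entry_eq k i j (Nat.lt_succ_iff.mp i.isLt) (Nat.lt_succ_iff.mp j.isLt)]
    simp [Fin.ext_iff]
  exact ⟨hmain, mul_eq_one_comm.mp hmain⟩
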